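/- arXiv:1507.08007 — 5 statements merged into one kernel-verified Lean document; each statement's English description precedes it below -/
import Mathlib

section
/- Let W be an m×m real matrix with nonnegative entries such that W^t → 0 as t → ∞ (entrywise), and let α ∈ ℝ^m be a row vector. Suppose x^{(0)}, x^{(1)}, x^{(2)}, … is a sequence of row vectors in ℝ^m satisfying the componentwise inequality x^{(t+1)} ≥ α + x^{(t)} W for every t ≥ 0. Then I − W is invertible and for every t ≥ 1 the componentwise inequality x^{(t)} ≥ x^{(0)} W^t + α (I − W)^{−1} (I − W^t) holds. -/
/-- Let `W` be an `m × m` nonnegative real matrix with `W^t → 0` entrywise,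
`α` a row vector, and `x` a sequence of row vectors with `x (t+1) ≥ α + x t * W`
componentwise. Then `I - W` is invertible and, for every `t ≥ 1`,
`x t ≥ x 0 * W^t + α * (I - W)⁻¹ * (I - W^t)` componentwise. -/
theorem stmt_3 (m : ℕ) (W : Matrix (Fin m) (Fin m) ℝ)
    (hWnonneg : ∀ i j, 0 ≤ W i j)
    (hWlim : Filter.Tendsto (fun t : ℕ => W ^ t) Filter.atTop (nhds 0))
    (α : Fin m → ℝ) (x : ℕ → Fin m → ℝ)
    (hrec : ∀ t, ∀ j, α j + Matrix.vecMul (x t) W j ≤ x (t + 1) j) :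
    IsUnit (1 - W) ∧
      ∀ t, 1 ≤ t → ∀ j,
        Matrix.vecMul (x 0) (W ^ t) j
          + Matrix.vecMul α ((1 - W)⁻¹ * (1 - W ^ t)) j ≤ x t j := by
  -- kernel of (1 - W) is trivial
  have hker : ∀ d : Fin m → ℝ, (1 - W).mulVec d = 0 → d = 0 := by
    intro d hd
    have hWd : W.mulVec d = d := by
      have h1 : (1 - W).mulVec d = d - W.mulVec d := by
        rw [Matrix.sub_mulVec, Matrix.one_mulVec]
      rw [h1] at hd
      have := sub_eq_zero.mp hd
      exact this.symm
    have hpow : ∀ t, (W ^ t).mulVec d = d := by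
      intro t
      induction t with
      | zero => simp
      | succ t ih =>
        rw [pow_succ, ← Matrix.mulVec_mulVec, hWd, ih]
    funext j
    have hlim : Filter.Tendsto (fun t => ((W ^ t).mulVec d) j) Filter.atTop (nhds 0) := by
      have hentry : ∀ k : Fin m,
          Filter.Tendsto (fun t => (W ^ t) j k) Filter.atTop (nhds 0) := by
        intro k
        have := (tendsto_pi_nhds.1 (tendsto_pi_nhds.1 hWlim j)) k
        simpa using this
      have : Filter.Tendsto (fun t => ∑ k, (W ^ t) j k * d k) Filter.atTop
          (nhds (∑ k : Fin m, (0 : ℝ) * d k)) :=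
        tendsto_finset_sum _ fun k _ => (hentry k).mul_const _
      simpa [Matrix.mulVec, dotProduct] using this
    have hconst : Filter.Tendsto (fun t => ((W ^ t).mulVec d) j) Filter.atTop (nhds (d j)) := by
      simp only [hpow]
      exact tendsto_const_nhds
    have := tendsto_nhds_unique hconst hlim
    simpa using this
  have hinj : Function.Injective (1 - W).mulVec := by
    intro u v h
    have h0 : (1 - W).mulVec (u - v) = 0 := by
      rw [Matrix.mulVec_sub, h, sub_self]
    exact sub_eq_zero.mp (hker _ h0)
  have hUnit : IsUnit (1 - W) := Matrix.mulVec_injective_iff_isUnit.1 hinj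
  refine ⟨hUnit, ?_⟩
  have hdet : IsUnit (1 - W).det := (Matrix.isUnit_iff_isUnit_det _).1 hUnit
  -- geometric sum identity
  have hS : ∀ t : ℕ, (1 - W)⁻¹ * (1 - W ^ t) = ∑ k ∈ Finset.range t, W ^ k := by
    intro t
    have h1 : (1 - W) * ∑ k ∈ Finset.range t, W ^ k = 1 - W ^ t := by
      rw [show (1 : Matrix (Fin m) (Fin m) ℝ) - W = -(W - 1) from (neg_sub W 1).symm,
        neg_mul, mul_geom_sum, neg_sub]
    rw [← h1, ← mul_assoc, Matrix.nonsing_inv_mul _ hdet, one_mul]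
  -- monotonicity of vecMul with nonnegative W
  have hmono : ∀ u v : Fin m → ℝ, (∀ i, u i ≤ v i) → ∀ j,
      Matrix.vecMul u W j ≤ Matrix.vecMul v W j := by
    intro u v h j
    simp only [Matrix.vecMul, dotProduct]
    exact Finset.sum_le_sum fun i _ => mul_le_mul_of_nonneg_right (h i) (hWnonneg i j)
  have key : ∀ t, ∀ j,
      Matrix.vecMul (x 0) (W ^ t) j
        + Matrix.vecMul α (∑ k ∈ Finset.range t, W ^ k) j ≤ x t j := by
    intro t
    induction t with
    | zero => intro j; simp [Matrix.vecMul_one]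
    | succ t ih =>
      intro j
      have hstep : Matrix.vecMul
          (fun i => Matrix.vecMul (x 0) (W ^ t) i
            + Matrix.vecMul α (∑ k ∈ Finset.range t, W ^ k) i) W j
          ≤ Matrix.vecMul (x t) W j := hmono _ _ ih j
      have hexp : Matrix.vecMul
          (fun i => Matrix.vecMul (x 0) (W ^ t) i
            + Matrix.vecMul α (∑ k ∈ Finset.range t, W ^ k) i) W j
          = Matrix.vecMul (x 0) (W ^ t * W) j
            + Matrix.vecMul α ((∑ k ∈ Finset.range t, W ^ k) * W) j := by
        have : (fun i => Matrix.vecMul (x 0) (W ^ t) i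
            + Matrix.vecMul α (∑ k ∈ Finset.range t, W ^ k) i)
            = Matrix.vecMul (x 0) (W ^ t) + Matrix.vecMul α (∑ k ∈ Finset.range t, W ^ k) :=
          rfl
        rw [this, Matrix.add_vecMul, Matrix.vecMul_vecMul, Matrix.vecMul_vecMul]
        rfl
      have hsum : (∑ k ∈ Finset.range (t + 1), W ^ k)
          = 1 + (∑ k ∈ Finset.range t, W ^ k) * W := by
        rw [Finset.sum_range_succ']
        simp [Finset.sum_mul, pow_succ, add_comm]
      calc Matrix.vecMul (x 0) (W ^ (t + 1)) j
            + Matrix.vecMul α (∑ k ∈ Finset.range (t + 1), W ^ k) j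
          = α j + (Matrix.vecMul (x 0) (W ^ t * W) j
            + Matrix.vecMul α ((∑ k ∈ Finset.range t, W ^ k) * W) j) := by
            rw [hsum, pow_succ]
            simp [Matrix.vecMul_add, Matrix.vecMul_one]
            ring
        _ ≤ α j + Matrix.vecMul (x t) W j := by
            rw [← hexp]; exact add_le_add le_rfl hstep
        _ ≤ x (t + 1) j := hrec t j
  intro t _ j
  rw [hS t]
  exact key t j
end

section
/- Let A = (α_{ij}) be a monotone (m+1)×m matrix with entries in [0,1] satisfying α_{i,j+1} ≤ α_{ij} for all 0 ≤ i ≤ m, 1 ≤ j ≤ m−1, and α_{i1} ≤ 1 for all i. With the convention α_{i0} := 1, define the (m+1)×(m+1) matrix T by t_{ij} = α_{ij} − α_{i,j+1} for 0 ≤ j ≤ m−1 and t_{im} = α_{im} (indices 0 ≤ i ≤ m), and let L be the (m+1)×(m+1) matrix with ℓ_{ij} = 1 if i ≥ j and ℓ_{ij} = 0 otherwise (indices 0 ≤ i, j ≤ m). Let W be the m×m matrix with w_{ij} = α_{ij} − α_{i−1,j} and let α₀ = (α_{01}, …, α_{0m}). Let p = (p_0, …, p_m) be a nonnegative vector with Σ_{i=0}^m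 p_i = 1, and let x^{(0)}, x^{(1)}, … be a sequence of row vectors in ℝ^m with x^{(0)}_j = Σ_{k=j}^m p_k for j = 1, …, m and x^{(t+1)} ≥ α₀ + x^{(t)} W componentwise for all t ≥ 0. Then for every t ≥ 0 and every j = 1, …, m, x^{(t)}_j ≥ (p T^t L)_j, where (p T^t L)_j denotes the coordinate of index j of the row vector p T^t L. -/
private lemma stmt5_telescope (f : ℕ → ℝ) :
    ∀ n, ∑ i ∈ Finset.Icc 1 n, (f i - f (i - 1)) = f n - f 0 := by
  intro n
  induction n with
  | zero => simp
  | succ n ih =>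
    rw [Finset.sum_Icc_succ_top (by omega), ih]
    simp only [Nat.add_sub_cancel]
    ring

private lemma stmt5_abel (f g : ℕ → ℝ) :
    ∀ n, ∑ i ∈ Finset.range (n + 1), g i * f i =
      f 0 * ∑ i ∈ Finset.range (n + 1), g i +
      ∑ i ∈ Finset.Icc 1 n, (f i - f (i - 1)) * ∑ k ∈ Finset.Icc i n, g k := by
  intro n
  induction n with
  | zero => simp [mul_comm]
  | succ n ih =>
    rw [Finset.sum_range_succ (fun i => g i * f i) (n + 1), ih,
      Finset.sum_Icc_succ_top (show 1 ≤ n + 1 by omega)]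
    have h1 : ∀ i ∈ Finset.Icc 1 n,
        (f i - f (i - 1)) * ∑ k ∈ Finset.Icc i (n + 1), g k =
        (f i - f (i - 1)) * ∑ k ∈ Finset.Icc i n, g k + (f i - f (i - 1)) * g (n + 1) := by
      intro i hi
      rw [Finset.sum_Icc_succ_top (by simp at hi; omega)]
      ring
    rw [Finset.sum_congr rfl h1, Finset.sum_add_distrib, ← Finset.sum_mul,
      stmt5_telescope f n, Finset.sum_range_succ g (n + 1)]
    simp only [Nat.add_sub_cancel, Finset.Icc_self, Finset.sum_singleton]
    ring

/-- Theorem 2 of the paper: lower bound on the expected proportions of fit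
individuals via the Markov chain associated to the monotone matrix of lower bounds `α`.

`α` is a monotone `(m+1) × m` matrix with entries in `[0,1]`, nonincreasing in `j`, with the
convention `α i 0 = 1`. `T` is the `(m+1) × (m+1)` transition matrix `t i j = α i j - α i (j+1)`
for `j < m`, `t i m = α i m`. `q t` is the distribution `p Tᵗ` of the associated Markov chain
started from `p`. `x` satisfies `x 0 j = ∑_{k=j}^m p k` and the componentwise recursion
`x (t+1) j ≥ α 0 j + ∑_{i=1}^m (α i j - α (i-1) j) x t i`. The conclusion
`x t j ≥ ∑_{k=j}^m q t k` is exactly `x t j ≥ (p Tᵗ L)_j` for the lower-triangular matrix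
`L` of ones. -/
theorem stmt_5 (m : ℕ) (hm : 1 ≤ m) (α : ℕ → ℕ → ℝ)
    (hα0 : ∀ i, i ≤ m → α i 0 = 1)
    (hrange : ∀ i j, i ≤ m → 1 ≤ j → j ≤ m → α i j ∈ Set.Icc (0 : ℝ) 1)
    (hmono : ∀ i j, 1 ≤ i → i ≤ m → 1 ≤ j → j ≤ m → α (i - 1) j ≤ α i j)
    (hdec : ∀ i j, i ≤ m → 1 ≤ j → j ≤ m - 1 → α i (j + 1) ≤ α i j)
    (T : ℕ → ℕ → ℝ)
    (hT : ∀ i j, i ≤ m → j < m → T i j = α i j - α i (j + 1))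
    (hTm : ∀ i, i ≤ m → T i m = α i m)
    (p : ℕ → ℝ) (hp : ∀ i, i ≤ m → 0 ≤ p i)
    (hpsum : ∑ i ∈ Finset.range (m + 1), p i = 1)
    (q : ℕ → ℕ → ℝ)
    (hq0 : ∀ i, i ≤ m → q 0 i = p i)
    (hq : ∀ t, ∀ j, j ≤ m → q (t + 1) j = ∑ i ∈ Finset.range (m + 1), q t i * T i j)
    (x : ℕ → ℕ → ℝ)
    (hx0 : ∀ j, 1 ≤ j → j ≤ m → x 0 j = ∑ k ∈ Finset.Icc j m, p k)
    (hx : ∀ t, ∀ j, 1 ≤ j → j ≤ m →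
      α 0 j + ∑ i ∈ Finset.Icc 1 m, (α i j - α (i - 1) j) * x t i ≤ x (t + 1) j) :
    ∀ t, ∀ j, 1 ≤ j → j ≤ m → ∑ k ∈ Finset.Icc j m, q t k ≤ x t j := by
  -- partial sums of rows of T
  have sumT : ∀ i, i ≤ m → ∀ d j, j + d = m → ∑ k ∈ Finset.Icc j m, T i k = α i j := by
    intro i hi d
    induction d with
    | zero =>
      intro j hj
      have : j = m := by omega
      subst this
      simp [hTm i hi]
    | succ d ih =>
      intro j hj
      have hjm : j < m := by omega
      have hins : Finset.Icc j m = insert j (Finset.Icc (j + 1) m) := by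
        ext k; simp [Finset.mem_Icc, Finset.mem_insert]; omega
      rw [hins, Finset.sum_insert (by simp), ih (j + 1) (by omega), hT i j hi hjm]
      ring
  -- T is stochastic
  have rowsum : ∀ i, i ≤ m → ∑ k ∈ Finset.range (m + 1), T i k = 1 := by
    intro i hi
    have h0 : Finset.range (m + 1) = Finset.Icc 0 m := by
      ext k; simp [Finset.mem_Icc, Finset.mem_range]
    rw [h0, sumT i hi m 0 (by omega), hα0 i hi]
  -- total mass is preserved
  have Ssum : ∀ t, ∑ i ∈ Finset.range (m + 1), q t i = 1 := by
    intro t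
    induction t with
    | zero =>
      have h0 : ∀ i ∈ Finset.range (m + 1), q 0 i = p i := by
        intro i hi
        exact hq0 i (Nat.lt_succ_iff.mp (Finset.mem_range.mp hi))
      rw [Finset.sum_congr rfl h0]
      exact hpsum
    | succ t ih =>
      have h1 : ∀ j ∈ Finset.range (m + 1),
          q (t + 1) j = ∑ i ∈ Finset.range (m + 1), q t i * T i j := by
        intro j hj
        exact hq t j (Nat.lt_succ_iff.mp (Finset.mem_range.mp hj))
      rw [Finset.sum_congr rfl h1, Finset.sum_comm]
      calc ∑ i ∈ Finset.range (m + 1), ∑ j ∈ Finset.range (m + 1), q t i * T i j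
          = ∑ i ∈ Finset.range (m + 1), q t i * ∑ j ∈ Finset.range (m + 1), T i j := by
            exact Finset.sum_congr rfl fun i _ => (Finset.mul_sum _ _ _).symm
        _ = ∑ i ∈ Finset.range (m + 1), q t i := by
            refine Finset.sum_congr rfl fun i hi => ?_
            rw [rowsum i (Nat.lt_succ_iff.mp (Finset.mem_range.mp hi)), mul_one]
        _ = 1 := ih
  intro t
  induction t with
  | zero =>
    intro j h1 hj
    rw [hx0 j h1 hj]
    refine le_of_eq (Finset.sum_congr rfl fun k hk => ?_)
    exact hq0 k (Finset.mem_Icc.mp hk).2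
  | succ t ih =>
    intro j h1 hj
    have e1 : ∑ k ∈ Finset.Icc j m, q (t + 1) k =
        ∑ i ∈ Finset.range (m + 1), q t i * α i j := by
      rw [Finset.sum_congr rfl fun k hk => hq t k (Finset.mem_Icc.mp hk).2, Finset.sum_comm]
      refine Finset.sum_congr rfl fun i hi => ?_
      rw [← Finset.mul_sum,
        sumT i (Nat.lt_succ_iff.mp (Finset.mem_range.mp hi)) (m - j) j (by omega)]
    rw [e1]
    have hA := stmt5_abel (fun i => α i j) (q t) m
    simp only at hA
    rw [hA, Ssum t, mul_one]
    refine le_trans ?_ (hx t j h1 hj)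
    refine add_le_add le_rfl (Finset.sum_le_sum fun i hi => ?_)
    obtain ⟨hi1, him⟩ := Finset.mem_Icc.mp hi
    exact mul_le_mul_of_nonneg_left (ih i hi1 him)
      (sub_nonneg.2 (hmono i j hi1 him h1 hj))
end

section
/- Let n ≥ 1 be an integer and q a real number with 1/(n+1) ≤ q ≤ 1. Define the (n+1)×n matrix Γ = (γ_{ij}) (rows indexed 0 ≤ i ≤ n, columns 1 ≤ j ≤ n) by: γ_{ij} = 1 for 1 ≤ i ≤ n and 1 ≤ j ≤ i−1; γ_{i,i+1} = (1−q)(n−i)/n for 0 ≤ i ≤ n−1; γ_{ii} = q + (1−q)(n−i)/n for 1 ≤ i ≤ n−1; γ_{nn} = q; and γ_{ij} = 0 for 0 ≤ i ≤ n−2 and i+2 ≤ j ≤ n. Then Γ is monotone, i.e. γ_{i−1,j} ≤ γ_{ij} for all 1 ≤ i ≤ n and 1 ≤ j ≤ n. -/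
/-- the matrix of cumulative transition probabilities of the point mutation
operator with parameter `q ∈ [1/(n+1), 1]` on the OneMax function (with levels
`φ_i = i`, `i = 0, …, n`) is monotone. -/
theorem stmt_9 (n : ℕ) (hn : 1 ≤ n) (q : ℝ)
    (hq1 : 1 / ((n : ℝ) + 1) ≤ q) (hq2 : q ≤ 1)
    (γ : ℕ → ℕ → ℝ)
    (h1 : ∀ i j, 1 ≤ i → i ≤ n → 1 ≤ j → j ≤ i - 1 → γ i j = 1)
    (h2 : ∀ i, i ≤ n - 1 → γ i (i + 1) = (1 - q) * ((n : ℝ) - (i : ℝ)) / n)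
    (h3 : ∀ i, 1 ≤ i → i ≤ n - 1 → γ i i = q + (1 - q) * ((n : ℝ) - (i : ℝ)) / n)
    (h4 : γ n n = q)
    (h5 : ∀ i j, i + 2 ≤ j → j ≤ n → γ i j = 0) :
    ∀ i j, 1 ≤ i → i ≤ n → 1 ≤ j → j ≤ n → γ (i - 1) j ≤ γ i j := by
  intro i j hi1 hin hj1 hjn
  have hn0 : (0:ℝ) < n := by exact_mod_cast hn
  have hn1 : (0:ℝ) < (n:ℝ) + 1 := by linarith
  rw [div_le_iff₀ hn1] at hq1
  have hkey : 1 - q ≤ q * n := by nlinarith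
  have hi1R : (1:ℝ) ≤ (i:ℝ) := by exact_mod_cast hi1
  have hinR : (i:ℝ) ≤ (n:ℝ) := by exact_mod_cast hin
  rcases lt_trichotomy j i with hji | hji | hji
  · -- j < i
    rcases eq_or_lt_of_le (Nat.succ_le_of_lt hji) with hji2 | hji2
    · -- j = i - 1
      have hi2 : 2 ≤ i := by omega
      have e1 : γ (i-1) j = q + (1 - q) * ((n : ℝ) - ((i:ℝ) - 1)) / n := by
        have := h3 (i-1) (by omega) (by omega)
        rw [show j = i - 1 by omega, this, Nat.cast_sub hi1]
        push_cast; ring_nf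
      have e2 : γ i j = 1 := h1 i j hi1 hin hj1 (by omega)
      rw [e1, e2]
      have hdl : (1 - q) * ((n : ℝ) - ((i:ℝ) - 1)) / n ≤ 1 - q := by
        rw [div_le_iff₀ hn0]; nlinarith
      linarith
    · -- j ≤ i - 2
      have e1 : γ (i-1) j = 1 := h1 (i-1) j (by omega) (by omega) hj1 (by omega)
      have e2 : γ i j = 1 := h1 i j hi1 hin hj1 (by omega)
      rw [e1, e2]
  · -- j = i
    subst hji
    have e1 : γ (j-1) j = (1 - q) * ((n : ℝ) - ((j:ℝ) - 1)) / n := by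
      have := h2 (j-1) (by omega)
      rw [show j - 1 + 1 = j by omega, Nat.cast_sub hj1] at this
      rw [this]; push_cast; ring_nf
    rw [e1]
    rcases eq_or_lt_of_le hjn with hjn2 | hjn2
    · subst hjn2
      rw [h4]
      rw [div_le_iff₀ hn0]; nlinarith
    · rw [h3 j hj1 (by omega)]
      have e2 : (1-q)*((n:ℝ)-((j:ℝ)-1))/n = (1-q)/n + (1-q)*((n:ℝ)-(j:ℝ))/n := by ring
      rw [e2]
      have e3 : (1-q)/(n:ℝ) ≤ q := by rw [div_le_iff₀ hn0]; nlinarith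
      linarith
  · -- j > i
    rcases eq_or_lt_of_le (Nat.succ_le_of_lt hji) with hji2 | hji2
    · -- j = i + 1
      have e1 : γ (i-1) j = 0 := h5 (i-1) j (by omega) hjn
      rw [e1, ← hji2, h2 i (by omega)]
      apply div_nonneg _ (le_of_lt hn0)
      nlinarith
    · -- j ≥ i + 2
      rw [h5 (i-1) j (by omega) hjn, h5 i j (by omega) hjn]
end

section
/- Let m ≥ 1 be an integer and let r, r̃ be real numbers with 0 ≤ r̃ ≤ r ≤ 1. For integers i with 0 ≤ i ≤ m and l, define Q(i, l) = Σ_{ν=0}^{min{i, i−l}} C(i, ν) (1 − r)^ν r^{i−ν} if l ≤ i, and Q(i, l) = 0 if l > i (so Q(i,l) = 1 when l ≤ 0). Define the (m+1)×m matrix Γ = (γ_{ij}) by γ_{ij} = Σ_{k=0}^{m−i} C(m−i, k) r̃^k (1 − r̃)^{m−i−k} Q(i, j − k) for 0 ≤ i ≤ m and 1 ≤ j ≤ m. Then Γ is monotone, i.e. γ_{i−1,j} ≤ γ_{ij} for all 1 ≤ i ≤ m and 1 ≤ j ≤ m. -/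
open Finset

private lemma sum_ite_le (N t : ℕ) (w : ℕ → ℝ) (h : t + 1 ≤ N) :
    (∑ k ∈ range N, if k ≤ t then w k else 0) = ∑ k ∈ range (t + 1), w k := by
  rw [← Finset.sum_subset (Finset.range_subset_range.2 h)
      (fun k _ hk => if_neg (fun hle => hk (mem_range.mpr (Nat.lt_succ_of_le hle))))]
  exact Finset.sum_congr rfl fun k hk => if_pos (Nat.lt_succ_iff.mp (mem_range.mp hk))

private lemma bin_sum (x y : ℝ) (n : ℕ) (g : ℕ → ℝ) :
    ∑ k ∈ range (n + 2), ((n + 1).choose k : ℝ) * x ^ k * y ^ (n + 1 - k) * g k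
    = x * ∑ k ∈ range (n + 1), (n.choose k : ℝ) * x ^ k * y ^ (n - k) * g (k + 1)
    + y * ∑ k ∈ range (n + 1), (n.choose k : ℝ) * x ^ k * y ^ (n - k) * g k := by
  rw [Finset.sum_range_succ']
  have h1 : ∀ k ∈ range (n + 1),
      ((n + 1).choose (k + 1) : ℝ) * x ^ (k + 1) * y ^ (n + 1 - (k + 1)) * g (k + 1)
      = x * ((n.choose k : ℝ) * x ^ k * y ^ (n - k) * g (k + 1))
        + (n.choose (k + 1) : ℝ) * x ^ (k + 1) * y ^ (n + 1 - (k + 1)) * g (k + 1) := by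
    intro k hk
    have hc : ((n + 1).choose (k + 1) : ℝ) = (n.choose k : ℝ) + (n.choose (k + 1) : ℝ) := by
      rw [Nat.choose_succ_succ]; push_cast; ring
    have he : n + 1 - (k + 1) = n - k := by omega
    rw [hc, he]; ring
  rw [Finset.sum_congr rfl h1, Finset.sum_add_distrib, ← Finset.mul_sum]
  have h2 : ∑ k ∈ range (n + 1), (n.choose (k + 1) : ℝ) * x ^ (k + 1) * y ^ (n + 1 - (k + 1)) * g (k + 1)
      + ((n + 1).choose 0 : ℝ) * x ^ 0 * y ^ (n + 1 - 0) * g 0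
      = y * ∑ k ∈ range (n + 1), (n.choose k : ℝ) * x ^ k * y ^ (n - k) * g k := by
    have e1 := Finset.sum_range_succ'
      (fun k => (n.choose k : ℝ) * x ^ k * y ^ (n + 1 - k) * g k) (n + 1)
    have e2 : ∑ k ∈ range (n + 2), (n.choose k : ℝ) * x ^ k * y ^ (n + 1 - k) * g k
        = ∑ k ∈ range (n + 1), (n.choose k : ℝ) * x ^ k * y ^ (n + 1 - k) * g k := by
      rw [Finset.sum_range_succ, Nat.choose_eq_zero_of_lt (by omega)]
      push_cast; ring
    have e3 : ∑ k ∈ range (n + 1), (n.choose k : ℝ) * x ^ k * y ^ (n + 1 - k) * g k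
        = y * ∑ k ∈ range (n + 1), (n.choose k : ℝ) * x ^ k * y ^ (n - k) * g k := by
      rw [Finset.mul_sum]
      refine Finset.sum_congr rfl fun k hk => ?_
      have hk' : k ≤ n := Nat.lt_succ_iff.mp (mem_range.mp hk)
      have : n + 1 - k = (n - k) + 1 := by omega
      rw [this, pow_succ]; ring
    simp only [Nat.choose_zero_right, Nat.cast_one, pow_zero] at e1 e2 ⊢
    rw [← e3, ← e2, e1]
  rw [← h2]; ring

/-- monotonicity of the cumulative transition matrix of a block-wise
mutation operator. Each of `m` blocks lacking a property acquires it with probability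
`r̃` and each block possessing it keeps it with probability `r`; if `r ≥ r̃` then the
matrix `γ i j = ∑_{k=0}^{m-i} C(m-i,k) r̃^k (1-r̃)^{m-i-k} Q(i, j-k)` is monotone, where
`Q(i,l) = ∑_{ν=0}^{min(i,i-l)} C(i,ν) (1-r)^ν r^{i-ν}` for `l ≤ i` and `Q(i,l) = 0` for
`l > i` (the index `j - k` is truncated natural subtraction, so `Q(i, j-k) = 1` whenever
`k ≥ j`, matching `Q(i,l) = 1` for `l ≤ 0`). -/
theorem stmt_10 (m : ℕ) (hm : 1 ≤ m) (r rt : ℝ)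
    (hrt0 : 0 ≤ rt) (hrtr : rt ≤ r) (hr1 : r ≤ 1)
    (Q : ℕ → ℕ → ℝ)
    (hQ1 : ∀ i l, l ≤ i →
      Q i l = ∑ ν ∈ Finset.range (min i (i - l) + 1),
        (Nat.choose i ν : ℝ) * (1 - r) ^ ν * r ^ (i - ν))
    (hQ2 : ∀ i l, i < l → Q i l = 0)
    (γ : ℕ → ℕ → ℝ)
    (hγ : ∀ i j, i ≤ m → 1 ≤ j → j ≤ m →
      γ i j = ∑ k ∈ Finset.range (m - i + 1),
        (Nat.choose (m - i) k : ℝ) * rt ^ k * (1 - rt) ^ (m - i - k) * Q i (j - k)) :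
    ∀ i j, 1 ≤ i → i ≤ m → 1 ≤ j → j ≤ m → γ (i - 1) j ≤ γ i j := by
  have hr0 : (0:ℝ) ≤ r := le_trans hrt0 hrtr
  have h1r : (0:ℝ) ≤ 1 - r := by linarith
  have hrt1 : rt ≤ 1 := le_trans hrtr hr1
  have h1rt : (0:ℝ) ≤ 1 - rt := by linarith
  -- Q i 0 = 1
  have Qone : ∀ i, Q i 0 = 1 := by
    intro i
    rw [hQ1 i 0 (Nat.zero_le i)]
    simp only [Nat.sub_zero, min_self]
    calc ∑ ν ∈ range (i + 1), (i.choose ν : ℝ) * (1 - r) ^ ν * r ^ (i - ν)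
        = ∑ ν ∈ range (i + 1), (1 - r) ^ ν * r ^ (i - ν) * (i.choose ν : ℝ) :=
          Finset.sum_congr rfl fun ν _ => by ring
      _ = ((1 - r) + r) ^ i := (add_pow (1 - r) r i).symm
      _ = 1 := by norm_num
  -- nonnegativity
  have Qnonneg : ∀ i l, 0 ≤ Q i l := by
    intro i l
    rcases le_or_gt l i with h | h
    · rw [hQ1 i l h]
      exact Finset.sum_nonneg fun ν _ => by positivity
    · rw [hQ2 i l h]
  -- antitone in l
  have Qanti : ∀ i l l', l ≤ l' → Q i l' ≤ Q i l := by
    intro i l l' hll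
    rcases le_or_gt l' i with h' | h'
    · have h : l ≤ i := le_trans hll h'
      rw [hQ1 i l h, hQ1 i l' h']
      apply Finset.sum_le_sum_of_subset_of_nonneg
      · exact Finset.range_subset_range.2 (by omega)
      · intro ν _ _; positivity
    · rw [hQ2 i l' h']; exact Qnonneg i l
  -- recurrence
  have Qrec : ∀ i l, Q (i + 1) l = r * Q i (l - 1) + (1 - r) * Q i l := by
    intro i l
    rcases Nat.eq_zero_or_pos l with hl0 | hl1
    · subst hl0
      simp only [Nat.zero_sub, Qone]
      ring
    rcases le_or_gt l (i + 1) with hle | hgt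
    · set g : ℕ → ℝ := fun ν => if ν ≤ i + 1 - l then (1:ℝ) else 0 with hg
      have e0 : Q (i + 1) l
          = ∑ ν ∈ range (i + 2), ((i + 1).choose ν : ℝ) * (1 - r) ^ ν * r ^ (i + 1 - ν) * g ν := by
        rw [hQ1 (i + 1) l hle, min_eq_right (by omega)]
        rw [show (∑ ν ∈ range (i + 2),
            ((i + 1).choose ν : ℝ) * (1 - r) ^ ν * r ^ (i + 1 - ν) * g ν)
          = ∑ ν ∈ range (i + 2), (if ν ≤ i + 1 - l then
              ((i + 1).choose ν : ℝ) * (1 - r) ^ ν * r ^ (i + 1 - ν) else 0) from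
          Finset.sum_congr rfl fun ν _ => by simp only [hg, mul_ite, mul_one, mul_zero]]
        rw [sum_ite_le (i + 2) (i + 1 - l) _ (by omega)]
      have e1 := bin_sum (1 - r) r i g
      have esecond : ∑ ν ∈ range (i + 1), (i.choose ν : ℝ) * (1 - r) ^ ν * r ^ (i - ν) * g ν
          = Q i (l - 1) := by
        rw [show (∑ ν ∈ range (i + 1), (i.choose ν : ℝ) * (1 - r) ^ ν * r ^ (i - ν) * g ν)
          = ∑ ν ∈ range (i + 1), (if ν ≤ i + 1 - l then
              (i.choose ν : ℝ) * (1 - r) ^ ν * r ^ (i - ν) else 0) from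
          Finset.sum_congr rfl fun ν _ => by simp only [hg, mul_ite, mul_one, mul_zero]]
        rw [sum_ite_le (i + 1) (i + 1 - l) _ (by omega)]
        rw [hQ1 i (l - 1) (by omega), min_eq_right (by omega),
          show i - (l - 1) = i + 1 - l by omega]
      have efirst : ∑ ν ∈ range (i + 1), (i.choose ν : ℝ) * (1 - r) ^ ν * r ^ (i - ν) * g (ν + 1)
          = Q i l := by
        rcases le_or_gt l i with hli | hli
        · rw [show (∑ ν ∈ range (i + 1),
              (i.choose ν : ℝ) * (1 - r) ^ ν * r ^ (i - ν) * g (ν + 1))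
            = ∑ ν ∈ range (i + 1), (if ν ≤ i - l then
                (i.choose ν : ℝ) * (1 - r) ^ ν * r ^ (i - ν) else 0) from
            Finset.sum_congr rfl fun ν _ => by
              simp only [hg, mul_ite, mul_one, mul_zero]
              exact if_congr (by omega) rfl rfl]
          rw [sum_ite_le (i + 1) (i - l) _ (by omega)]
          rw [hQ1 i l hli, min_eq_right (by omega)]
        · have hl : l = i + 1 := by omega
          rw [hl, hQ2 i (i + 1) (by omega)]
          refine Finset.sum_eq_zero fun ν _ => ?_
          have : g (ν + 1) = 0 := by
            simp only [hg]
            rw [if_neg (by omega)]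
          rw [this, mul_zero]
      rw [e0, e1, esecond, efirst]
      ring
    · rw [hQ2 (i + 1) l hgt, hQ2 i l (by omega), hQ2 i (l - 1) (by omega)]
      ring
  -- main part
  intro i j hi1 him hj1 hjm
  obtain ⟨i', rfl⟩ : ∃ i', i = i' + 1 := ⟨i - 1, by omega⟩
  simp only [Nat.add_sub_cancel]
  set n := m - (i' + 1) with hn
  have hn' : m - i' = n + 1 := by omega
  set A := ∑ k ∈ range (n + 1), (n.choose k : ℝ) * rt ^ k * (1 - rt) ^ (n - k) * Q i' (j - (k + 1))
    with hA
  set B := ∑ k ∈ range (n + 1), (n.choose k : ℝ) * rt ^ k * (1 - rt) ^ (n - k) * Q i' (j - k)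
    with hB
  have hBA : B ≤ A := by
    refine Finset.sum_le_sum fun k _ => ?_
    have hw : (0:ℝ) ≤ (n.choose k : ℝ) * rt ^ k * (1 - rt) ^ (n - k) := by positivity
    exact mul_le_mul_of_nonneg_left (Qanti i' (j - (k + 1)) (j - k) (by omega)) hw
  have hlow : γ i' j = rt * A + (1 - rt) * B := by
    rw [hγ i' j (by omega) hj1 hjm, hn']
    have := bin_sum rt (1 - rt) n (fun k => Q i' (j - k))
    simpa using this
  have hhigh : γ (i' + 1) j = r * A + (1 - r) * B := by
    rw [hγ (i' + 1) j him hj1 hjm, ← hn]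
    have : ∀ k ∈ range (n + 1),
        (n.choose k : ℝ) * rt ^ k * (1 - rt) ^ (n - k) * Q (i' + 1) (j - k)
        = r * ((n.choose k : ℝ) * rt ^ k * (1 - rt) ^ (n - k) * Q i' (j - (k + 1)))
          + (1 - r) * ((n.choose k : ℝ) * rt ^ k * (1 - rt) ^ (n - k) * Q i' (j - k)) := by
      intro k _
      rw [Qrec i' (j - k), show j - k - 1 = j - (k + 1) from by omega]
      ring
    rw [Finset.sum_congr rfl this, Finset.sum_add_distrib, ← Finset.mul_sum, ← Finset.mul_sum]
  rw [hlow, hhigh]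
  nlinarith [mul_le_mul_of_nonneg_left hBA (show (0:ℝ) ≤ r - rt by linarith)]
end

section
/- Let n ≥ 2 and ℓ ≥ 2 be integers and set m = ℓ − 1. Suppose x^{(0)}, x^{(1)}, x^{(2)}, … is a sequence of vectors in ℝ^m such that x^{(0)}_j ≥ 0 for all j = 1, …, m and for every t ≥ 0: x^{(t+1)}_1 ≥ 1/n + (1 − 1/n) x^{(t)}_1, and x^{(t+1)}_j ≥ (1/n) x^{(t)}_{j−1} + (1 − 1/n) x^{(t)}_j for 2 ≤ j ≤ m. Then for every t ≥ 0, x^{(t)}_m ≥ 1 − √(ℓ−1) · (1 − (2(n−1)/n²)(1 − cos(π/ℓ)))^{t/2}. -/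
open Real

/-- auxiliary weighted AM-GM -/
lemma stmt11_amgm (p q u v : ℝ) (hp : 0 < p) (hq : 0 < q) :
    u * v ≤ q / (2 * p) * u ^ 2 + p / (2 * q) * v ^ 2 := by
  have h1 : q / (2 * p) * u ^ 2 + p / (2 * q) * v ^ 2 - u * v
      = (q * u - p * v) ^ 2 / (2 * p * q) := by
    field_simp
    ring
  have h2 : 0 ≤ (q * u - p * v) ^ 2 / (2 * p * q) := by positivity
  linarith

/-- path graph eigenvalue bound -/
lemma stmt11_path (m : ℕ) (w : ℕ → ℝ) (hw0 : w 0 = 0) :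
    ∑ i ∈ Finset.range m, w i * w (i + 1)
      ≤ Real.cos (π / ((m : ℝ) + 1)) * ∑ i ∈ Finset.range m, w (i + 1) ^ 2 := by
  rcases Nat.eq_zero_or_pos m with rfl | hm
  · simp
  obtain ⟨k, rfl⟩ := Nat.exists_eq_succ_of_ne_zero hm.ne'
  have hcast : ((k + 1 : ℕ) : ℝ) + 1 = (k : ℝ) + 2 := by push_cast; ring
  rw [hcast]
  set θ : ℝ := π / ((k : ℝ) + 2) with hθ
  set s : ℕ → ℝ := fun j => Real.sin ((j : ℝ) * θ) with hs
  have hθpos : 0 < θ := by positivity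
  have hspos : ∀ j, 1 ≤ j → j ≤ k + 1 → 0 < s j := by
    intro j h1 h2
    apply Real.sin_pos_of_pos_of_lt_pi
    · have : (1 : ℝ) ≤ (j : ℝ) := by exact_mod_cast h1
      nlinarith
    · have hj : (j : ℝ) ≤ (k : ℝ) + 1 := by exact_mod_cast h2
      have hlt : (j : ℝ) * θ ≤ ((k : ℝ) + 1) * θ := by nlinarith
      have : ((k : ℝ) + 1) * θ < π := by
        rw [hθ]
        rw [mul_div_assoc'] ; rw [div_lt_iff₀ (by positivity)]
        nlinarith [Real.pi_pos]
      linarith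
  have hs0 : s 0 = 0 := by simp [hs]
  have hstop : s (k + 2) = 0 := by
    have hpi : ((k : ℝ) + 2) * θ = π := by
      rw [hθ]; field_simp
    simp only [hs]
    push_cast
    rw [hpi, Real.sin_pi]
  have hrec : ∀ i : ℕ, s (i + 2) + s i = 2 * Real.cos θ * s (i + 1) := by
    intro i
    simp only [hs]
    push_cast
    have e1 : ((i : ℝ) + 2) * θ = ((i : ℝ) + 1) * θ + θ := by ring
    have e2 : (i : ℝ) * θ = ((i : ℝ) + 1) * θ - θ := by ring
    rw [e1, e2, Real.sin_add, Real.sin_sub]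
    ring
  have pointwise : ∀ i ∈ Finset.range (k + 1),
      w i * w (i + 1) ≤ s (i + 1) / (2 * s i) * w i ^ 2 + s i / (2 * s (i + 1)) * w (i + 1) ^ 2 := by
    intro i hi
    rcases Nat.eq_zero_or_pos i with rfl | hipos
    · simp [hw0, hs0]
    · exact stmt11_amgm (s i) (s (i + 1)) (w i) (w (i + 1))
        (hspos i hipos (by have := Finset.mem_range.mp hi; omega))
        (hspos (i + 1) (by omega) (by have := Finset.mem_range.mp hi; omega))
  calc ∑ i ∈ Finset.range (k + 1), w i * w (i + 1)
      ≤ ∑ i ∈ Finset.range (k + 1),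
          (s (i + 1) / (2 * s i) * w i ^ 2 + s i / (2 * s (i + 1)) * w (i + 1) ^ 2) :=
        Finset.sum_le_sum pointwise
    _ = (∑ i ∈ Finset.range (k + 1), s (i + 1) / (2 * s i) * w i ^ 2)
        + ∑ i ∈ Finset.range (k + 1), s i / (2 * s (i + 1)) * w (i + 1) ^ 2 :=
        Finset.sum_add_distrib
    _ = (∑ i ∈ Finset.range (k + 1), s (i + 2) / (2 * s (i + 1)) * w (i + 1) ^ 2)
        + ∑ i ∈ Finset.range (k + 1), s i / (2 * s (i + 1)) * w (i + 1) ^ 2 := by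
        congr 1
        rw [Finset.sum_range_succ' (fun i => s (i + 1) / (2 * s i) * w i ^ 2) k]
        rw [Finset.sum_range_succ (fun i => s (i + 2) / (2 * s (i + 1)) * w (i + 1) ^ 2) k]
        simp [hw0, hstop]
    _ = ∑ i ∈ Finset.range (k + 1), Real.cos θ * w (i + 1) ^ 2 := by
        rw [← Finset.sum_add_distrib]
        apply Finset.sum_congr rfl
        intro i hi
        have hne : s (i + 1) ≠ 0 :=
          (hspos (i + 1) (by omega) (by have := Finset.mem_range.mp hi; omega)).ne'
        rw [div_mul_eq_mul_div, div_mul_eq_mul_div, ← add_div]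
        rw [show s (i + 2) * w (i + 1) ^ 2 + s i * w (i + 1) ^ 2
            = (s (i + 2) + s i) * w (i + 1) ^ 2 by ring, hrec i]
        field_simp
    _ = Real.cos θ * ∑ i ∈ Finset.range (k + 1), w (i + 1) ^ 2 := by
        rw [Finset.mul_sum]

/-- one contraction step in ℓ² -/
lemma stmt11_step (a b : ℝ) (ha : 0 ≤ a) (hb : 0 ≤ b) (m : ℕ)
    (w : ℕ → ℝ) (hw0 : w 0 = 0) :
    ∑ i ∈ Finset.range m, (b * w i + a * w (i + 1)) ^ 2
      ≤ (a ^ 2 + b ^ 2 + 2 * a * b * Real.cos (π / ((m : ℝ) + 1)))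
          * ∑ i ∈ Finset.range m, w (i + 1) ^ 2 := by
  have hA : ∑ i ∈ Finset.range m, w i ^ 2 ≤ ∑ i ∈ Finset.range m, w (i + 1) ^ 2 := by
    rcases Nat.eq_zero_or_pos m with rfl | hm
    · simp
    obtain ⟨k, rfl⟩ := Nat.exists_eq_succ_of_ne_zero hm.ne'
    rw [Finset.sum_range_succ' (fun i => w i ^ 2) k,
        Finset.sum_range_succ (fun i => w (i + 1) ^ 2) k]
    have h1 := sq_nonneg (w (k + 1))
    simp only [hw0]
    nlinarith [sq_nonneg (w 0)]
  have hC := stmt11_path m w hw0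
  calc ∑ i ∈ Finset.range m, (b * w i + a * w (i + 1)) ^ 2
      = b ^ 2 * (∑ i ∈ Finset.range m, w i ^ 2)
        + a ^ 2 * (∑ i ∈ Finset.range m, w (i + 1) ^ 2)
        + 2 * a * b * ∑ i ∈ Finset.range m, w i * w (i + 1) := by
        rw [Finset.mul_sum, Finset.mul_sum, Finset.mul_sum, ← Finset.sum_add_distrib,
          ← Finset.sum_add_distrib]
        exact Finset.sum_congr rfl fun i _ => by ring
    _ ≤ b ^ 2 * (∑ i ∈ Finset.range m, w (i + 1) ^ 2)
        + a ^ 2 * (∑ i ∈ Finset.range m, w (i + 1) ^ 2)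
        + 2 * a * b * (Real.cos (π / ((m : ℝ) + 1)) * ∑ i ∈ Finset.range m, w (i + 1) ^ 2) := by
        gcongr
    _ = (a ^ 2 + b ^ 2 + 2 * a * b * Real.cos (π / ((m : ℝ) + 1)))
          * ∑ i ∈ Finset.range m, w (i + 1) ^ 2 := by ring

/-- the dominating sequence -/
noncomputable def stmt11_z (a b : ℝ) : ℕ → ℕ → ℝ
  | 0, j => if j = 0 then 0 else 1
  | (t + 1), j => if j = 0 then 0 else b * stmt11_z a b t (j - 1) + a * stmt11_z a b t j

lemma stmt11_z_zero (a b : ℝ) (t : ℕ) : stmt11_z a b t 0 = 0 := by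
  cases t <;> simp [stmt11_z]

lemma stmt11_z_nonneg (a b : ℝ) (ha : 0 ≤ a) (hb : 0 ≤ b) :
    ∀ t j, 0 ≤ stmt11_z a b t j := by
  intro t
  induction t with
  | zero => intro j; simp [stmt11_z]; split <;> norm_num
  | succ t ih =>
    intro j
    simp only [stmt11_z]
    split
    · exact le_rfl
    · exact add_nonneg (mul_nonneg hb (ih _)) (mul_nonneg ha (ih _))

/-- inequality (17) of the paper: for the Randomized Local Search bound on
`ℓ`-unimodal functions, any nonnegative sequence of vectors `x t` (components `1..m`,
`m = ℓ - 1`) satisfying `x (t+1) 1 ≥ 1/n + (1 - 1/n) x t 1` and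
`x (t+1) j ≥ (1/n) x t (j-1) + (1 - 1/n) x t j` for `2 ≤ j ≤ m` satisfies
`x t m ≥ 1 - √(ℓ-1) (1 - (2(n-1)/n²)(1 - cos(π/ℓ)))^{t/2}` for every `t ≥ 0`. -/
theorem stmt_11 (n l : ℕ) (hn : 2 ≤ n) (hl : 2 ≤ l) (m : ℕ) (hm : m = l - 1)
    (x : ℕ → ℕ → ℝ)
    (h0 : ∀ j, 1 ≤ j → j ≤ m → 0 ≤ x 0 j)
    (h1 : ∀ t, 1 / (n : ℝ) + (1 - 1 / (n : ℝ)) * x t 1 ≤ x (t + 1) 1)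
    (hj : ∀ t, ∀ j, 2 ≤ j → j ≤ m →
      (1 / (n : ℝ)) * x t (j - 1) + (1 - 1 / (n : ℝ)) * x t j ≤ x (t + 1) j) :
    ∀ t : ℕ,
      1 - Real.sqrt ((l : ℝ) - 1) *
          (1 - (2 * ((n : ℝ) - 1) / (n : ℝ) ^ 2) * (1 - Real.cos (π / (l : ℝ)))) ^ ((t : ℝ) / 2)
        ≤ x t m := by
  intro t
  have hm1 : 1 ≤ m := by omega
  have hml : m + 1 = l := by omega
  have hml' : (m : ℝ) + 1 = (l : ℝ) := by exact_mod_cast hml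
  have hn0 : (n : ℝ) ≠ 0 := by positivity
  have hn2 : (2 : ℝ) ≤ (n : ℝ) := by exact_mod_cast hn
  set b : ℝ := 1 / (n : ℝ) with hbdef
  set a : ℝ := 1 - b with hadef
  have hb : 0 ≤ b := by positivity
  have hb1 : b ≤ 1 := by rw [hbdef]; rw [div_le_one (by linarith)]; linarith
  have ha : 0 ≤ a := by rw [hadef]; linarith
  set c : ℝ := Real.cos (π / ((m : ℝ) + 1)) with hcdef
  have hc0 : 0 ≤ c := by
    rw [hcdef]
    apply Real.cos_nonneg_of_mem_Icc
    constructor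
    · have : 0 ≤ π / ((m : ℝ) + 1) := by positivity
      nlinarith [Real.pi_pos]
    · rw [hml']
      apply div_le_div_of_nonneg_left Real.pi_pos.le (by norm_num)
      exact_mod_cast hl
  set lam : ℝ := a ^ 2 + b ^ 2 + 2 * a * b * c with hlamdef
  have hlam0 : 0 ≤ lam := by positivity
  -- identify lambda with the expression in the statement
  have hlameq : 1 - (2 * ((n : ℝ) - 1) / (n : ℝ) ^ 2) * (1 - Real.cos (π / (l : ℝ))) = lam := by
    rw [← hml', hlamdef, hadef, hbdef]
    field_simp
    ring
  -- dominance
  have hdom : ∀ t j, 1 ≤ j → j ≤ m → 1 - x t j ≤ stmt11_z a b t j := by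
    intro t
    induction t with
    | zero =>
      intro j hj1 hj2
      have := h0 j hj1 hj2
      have hz : stmt11_z a b 0 j = 1 := by simp [stmt11_z]; omega
      rw [hz]; linarith
    | succ t ih =>
      intro j hj1 hj2
      rcases eq_or_lt_of_le hj1 with heq | hgt
      · -- j = 1
        subst heq
        have hzj : stmt11_z a b (t + 1) 1
            = b * stmt11_z a b t 0 + a * stmt11_z a b t 1 := by
          simp [stmt11_z]
        rw [hzj, stmt11_z_zero]
        have hxb : b + a * x t 1 ≤ x (t + 1) 1 := by
          rw [hadef, hbdef]; exact h1 t
        have i2 := ih 1 le_rfl hj2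
        have e2 : a * (1 - x t 1) ≤ a * stmt11_z a b t 1 :=
          mul_le_mul_of_nonneg_left i2 ha
        have expand : a * (1 - x t 1) = a - a * x t 1 := by ring
        have hab : a = 1 - b := hadef
        linarith
      · -- 2 ≤ j
        have hj2' : 2 ≤ j := hgt
        have hj0 : j ≠ 0 := by omega
        have hzj : stmt11_z a b (t + 1) j
            = b * stmt11_z a b t (j - 1) + a * stmt11_z a b t j := by
          simp [stmt11_z, hj0]
        have hx : b * x t (j - 1) + a * x t j ≤ x (t + 1) j := by
          rw [hadef, hbdef]; exact hj t j hj2' hj2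
        have i1 := ih (j - 1) (by omega) (by omega)
        have i2 := ih j (by omega) hj2
        have e1 : b * (1 - x t (j - 1)) ≤ b * stmt11_z a b t (j - 1) :=
          mul_le_mul_of_nonneg_left i1 hb
        have e2 : a * (1 - x t j) ≤ a * stmt11_z a b t j :=
          mul_le_mul_of_nonneg_left i2 ha
        rw [hzj]
        have hab : a = 1 - b := hadef
        have ex1 : b * (1 - x t (j - 1)) = b - b * x t (j - 1) := by ring
        have ex2 : a * (1 - x t j) = a - a * x t j := by ring
        linarith
  -- sum of squares
  set S : ℕ → ℝ := fun t => ∑ i ∈ Finset.range m, (stmt11_z a b t (i + 1)) ^ 2 with hSdef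
  have hS0 : S 0 = (m : ℝ) := by
    simp [hSdef, stmt11_z]
  have hstep : ∀ t, S (t + 1) ≤ lam * S t := by
    intro t
    have hre : ∀ i : ℕ, stmt11_z a b (t + 1) (i + 1)
        = b * stmt11_z a b t i + a * stmt11_z a b t (i + 1) := by
      intro i; simp [stmt11_z]
    have key := stmt11_step a b ha hb m (stmt11_z a b t) (stmt11_z_zero a b t)
    calc S (t + 1) = ∑ i ∈ Finset.range m, (b * stmt11_z a b t i + a * stmt11_z a b t (i + 1)) ^ 2 := by
          apply Finset.sum_congr rfl
          intro i _
          rw [hre i]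
      _ ≤ lam * S t := key
  have hSt : ∀ t, S t ≤ lam ^ t * (m : ℝ) := by
    intro t
    induction t with
    | zero => rw [hS0]; norm_num
    | succ t ih =>
      calc S (t + 1) ≤ lam * S t := hstep t
        _ ≤ lam * (lam ^ t * (m : ℝ)) := mul_le_mul_of_nonneg_left ih hlam0
        _ = lam ^ (t + 1) * (m : ℝ) := by ring
  -- extract the last coordinate
  have hz0 : 0 ≤ stmt11_z a b t m := stmt11_z_nonneg a b ha hb t m
  have hzS : (stmt11_z a b t m) ^ 2 ≤ S t := by
    obtain ⟨k, hk⟩ := Nat.exists_eq_succ_of_ne_zero (by omega : m ≠ 0)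
    rw [hSdef]
    have : stmt11_z a b t m = stmt11_z a b t (k + 1) := by rw [hk]
    rw [this, hk]
    exact Finset.single_le_sum (f := fun i => (stmt11_z a b t (i + 1)) ^ 2)
      (fun i _ => sq_nonneg _) (Finset.self_mem_range_succ k)
  have hzsqrt : stmt11_z a b t m ≤ Real.sqrt (lam ^ t * (m : ℝ)) := by
    rw [← Real.sqrt_sq hz0]
    exact Real.sqrt_le_sqrt (le_trans hzS (hSt t))
  have hsqrteq : Real.sqrt (lam ^ t * (m : ℝ)) = Real.sqrt ((l : ℝ) - 1) * lam ^ ((t : ℝ) / 2) := by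
    rw [Real.sqrt_mul (pow_nonneg hlam0 t)]
    have e1 : Real.sqrt ((m : ℝ)) = Real.sqrt ((l : ℝ) - 1) := by
      congr 1; linarith [hml']
    have e2 : Real.sqrt (lam ^ t) = lam ^ ((t : ℝ) / 2) := by
      rw [show ((t : ℝ) / 2) = (t : ℝ) * (1 / 2) by ring, Real.rpow_mul hlam0,
        Real.rpow_natCast, Real.sqrt_eq_rpow]
    rw [e1, e2]; ring
  have hfin := hdom t m hm1 le_rfl
  rw [hlameq]
  have : stmt11_z a b t m ≤ Real.sqrt ((l : ℝ) - 1) * lam ^ ((t : ℝ) / 2) := by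
    rw [← hsqrteq]; exact hzsqrt
  linarith
end
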